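/- Let (Ω,Σ) be a measurable space, let S be a positive kernel operator on M(Ω) with associated kernel k, and assume there is a finite positive measure μ ∈ M(Ω) such that for every x ∈ Ω the measure k(x,·) is absolutely continuous with respect to μ. Then: (a) for every ν ∈ M(Ω), the measure Sν is absolutely continuous with respect to μ (i.e., the range of S is contained in the band {μ}^{⊥⊥} generated by μ in M(Ω)); (b) the norm adjoint S* maps the norm dual M(Ω)* into B_b(Ω), i.e., for every bounded linear functional φ on M(Ω) there exists f ∈ B_b(Ω) such that ⟨S*φ,ν⟩ = ∫_Ω f dν for all ν ∈ M(Ω). -/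

import Mathlib

open MeasureTheory Filter Topology

/-- The integral `∫ f dμ` of a function against a finite signed measure, defined via the
Jordan decomposition of `μ`. -/
noncomputable def sInt {Ω : Type*} [MeasurableSpace Ω] (μ : SignedMeasure Ω) (f : Ω → ℝ) : ℝ :=
  (∫ x, f x ∂μ.toJordanDecomposition.posPart) - ∫ x, f x ∂μ.toJordanDecomposition.negPart

/-- `f` belongs to `B_b(Ω)`, i.e. `f` is a bounded measurable real-valued function. -/
def IsBddMeas {Ω : Type*} [MeasurableSpace Ω] (f : Ω → ℝ) : Prop :=
  Measurable f ∧ ∃ C : ℝ, ∀ x, |f x| ≤ C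

/-- The total variation norm of a finite signed measure. -/
noncomputable def tvNorm {Ω : Type*} [MeasurableSpace Ω] (μ : SignedMeasure Ω) : ℝ :=
  (μ.totalVariation Set.univ).toReal

/-- A bounded kernel on `Ω`: `x ↦ k x` is a family of finite signed measures such that
`x ↦ k x A` is measurable for every measurable `A` and `sup_x |k x|(Ω) < ∞`. -/
def IsBoundedKernel {Ω : Type*} [MeasurableSpace Ω] (k : Ω → SignedMeasure Ω) : Prop :=
  (∀ A : Set Ω, MeasurableSet A → Measurable fun x => k x A) ∧
    ∃ C : ℝ, ∀ x, tvNorm (k x) ≤ C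

section Aux

variable {Ω : Type*} [MeasurableSpace Ω]

lemma tvNorm_nonneg (m : SignedMeasure Ω) : 0 ≤ tvNorm m := ENNReal.toReal_nonneg

lemma sm_apply (m : SignedMeasure Ω) {A : Set Ω} (hA : MeasurableSet A) :
    m A = (m.toJordanDecomposition.posPart A).toReal
      - (m.toJordanDecomposition.negPart A).toReal := by
  conv_lhs => rw [← m.toSignedMeasure_toJordanDecomposition]
  rw [JordanDecomposition.toSignedMeasure, Measure.toSignedMeasure_sub_apply hA]
  rfl

lemma integrable_of_bdd {m : Measure Ω} [IsFiniteMeasure m] {f : Ω → ℝ} {C : ℝ}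
    (hf : Measurable f) (hC : ∀ x, |f x| ≤ C) : Integrable f m :=
  ⟨hf.aestronglyMeasurable, HasFiniteIntegral.of_bounded (C := C)
    (ae_of_all _ fun x => by simpa [Real.norm_eq_abs] using hC x)⟩

lemma sInt_indicator (m : SignedMeasure Ω) {A : Set Ω} (hA : MeasurableSet A) (c : ℝ) :
    sInt m (A.indicator fun _ => c) = c * m A := by
  rw [sInt, integral_indicator_const c hA, integral_indicator_const c hA, sm_apply m hA]
  simp [smul_eq_mul, Measure.real]; ring

lemma sInt_add (m : SignedMeasure Ω) {f g : Ω → ℝ}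
    (hf : Measurable f) (hg : Measurable g)
    (hbf : ∃ C, ∀ x, |f x| ≤ C) (hbg : ∃ C, ∀ x, |g x| ≤ C) :
    sInt m (fun x => f x + g x) = sInt m f + sInt m g := by
  obtain ⟨Cf, hCf⟩ := hbf
  obtain ⟨Cg, hCg⟩ := hbg
  rw [sInt, integral_add (integrable_of_bdd hf hCf) (integrable_of_bdd hg hCg),
    integral_add (integrable_of_bdd hf hCf) (integrable_of_bdd hg hCg), sInt, sInt]
  ring

lemma sInt_smul (m : SignedMeasure Ω) (f : Ω → ℝ) (c : ℝ) :
    sInt m (fun x => c * f x) = c * sInt m f := by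
  rw [sInt, integral_const_mul, integral_const_mul, sInt]
  ring

lemma tvNorm_eq (s : SignedMeasure Ω) :
    ∃ i : Set Ω, MeasurableSet i ∧ tvNorm s = s i - s iᶜ := by
  obtain ⟨i, hi₁, hi₂, hi₃, hpos, hneg⟩ := s.toJordanDecomposition_spec
  refine ⟨i, hi₁, ?_⟩
  rw [tvNorm, SignedMeasure.totalVariation, Measure.add_apply, hpos, hneg,
    SignedMeasure.toMeasureOfZeroLE_apply _ hi₂ hi₁ MeasurableSet.univ,
    SignedMeasure.toMeasureOfLEZero_apply _ hi₃ hi₁.compl MeasurableSet.univ,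
    ENNReal.toReal_add ENNReal.coe_ne_top ENNReal.coe_ne_top]
  simp [Set.inter_univ, sub_eq_add_neg]

lemma sInt_abs_le (m : SignedMeasure Ω) {f : Ω → ℝ} {C : ℝ} (hC : ∀ x, |f x| ≤ C) :
    |sInt m f| ≤ C * tvNorm m := by
  have h1 : ‖∫ x, f x ∂m.toJordanDecomposition.posPart‖
      ≤ C * (m.toJordanDecomposition.posPart Set.univ).toReal :=
    norm_integral_le_of_norm_le_const (ae_of_all _ fun x => by
      simpa [Real.norm_eq_abs] using hC x)
  have h2 : ‖∫ x, f x ∂m.toJordanDecomposition.negPart‖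
      ≤ C * (m.toJordanDecomposition.negPart Set.univ).toReal :=
    norm_integral_le_of_norm_le_const (ae_of_all _ fun x => by
      simpa [Real.norm_eq_abs] using hC x)
  have htv : tvNorm m = (m.toJordanDecomposition.posPart Set.univ).toReal
      + (m.toJordanDecomposition.negPart Set.univ).toReal := by
    rw [tvNorm, SignedMeasure.totalVariation, Measure.add_apply,
      ENNReal.toReal_add (measure_ne_top _ _) (measure_ne_top _ _)]
  rw [sInt, htv, Real.norm_eq_abs] at *
  calc |(∫ x, f x ∂m.toJordanDecomposition.posPart)
      - ∫ x, f x ∂m.toJordanDecomposition.negPart|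
      ≤ |∫ x, f x ∂m.toJordanDecomposition.posPart|
        + |∫ x, f x ∂m.toJordanDecomposition.negPart| := abs_sub _ _
    _ ≤ C * (m.toJordanDecomposition.posPart Set.univ).toReal
        + C * (m.toJordanDecomposition.negPart Set.univ).toReal := add_le_add h1 h2
    _ = C * ((m.toJordanDecomposition.posPart Set.univ).toReal
        + (m.toJordanDecomposition.negPart Set.univ).toReal) := by ring

lemma sInt_tendsto (m : SignedMeasure Ω) {F : ℕ → Ω → ℝ} {f : Ω → ℝ} {C : ℝ}
    (hF : ∀ n, Measurable (F n)) (hbdd : ∀ n x, |F n x| ≤ C)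
    (hf : ∀ x, Tendsto (fun n => F n x) atTop (𝓝 (f x))) :
    Tendsto (fun n => sInt m (F n)) atTop (𝓝 (sInt m f)) := by
  have h1 : Tendsto (fun n => ∫ x, F n x ∂m.toJordanDecomposition.posPart) atTop
      (𝓝 (∫ x, f x ∂m.toJordanDecomposition.posPart)) := by
    refine tendsto_integral_of_dominated_convergence (fun _ => C)
      (fun n => (hF n).aestronglyMeasurable) (integrable_const C)
      (fun n => ae_of_all _ fun x => by simpa [Real.norm_eq_abs] using hbdd n x)
      (ae_of_all _ hf)
  have h2 : Tendsto (fun n => ∫ x, F n x ∂m.toJordanDecomposition.negPart) atTop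
      (𝓝 (∫ x, f x ∂m.toJordanDecomposition.negPart)) := by
    refine tendsto_integral_of_dominated_convergence (fun _ => C)
      (fun n => (hF n).aestronglyMeasurable) (integrable_const C)
      (fun n => ae_of_all _ fun x => by simpa [Real.norm_eq_abs] using hbdd n x)
      (ae_of_all _ hf)
  exact h1.sub h2

lemma tvNorm_toSignedMeasure_le (m : Measure Ω) [IsFiniteMeasure m] :
    tvNorm m.toSignedMeasure ≤ (m Set.univ).toReal := by
  obtain ⟨i, hi, he⟩ := tvNorm_eq m.toSignedMeasure
  rw [he, Measure.toSignedMeasure_apply_measurable hi,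
    Measure.toSignedMeasure_apply_measurable hi.compl]
  have h1 : (m i).toReal ≤ (m Set.univ).toReal :=
    ENNReal.toReal_mono (measure_ne_top _ _) (measure_mono (Set.subset_univ _))
  have h2 : 0 ≤ (m iᶜ).toReal := ENNReal.toReal_nonneg
  simp only [Measure.real]
  linarith

lemma tvNorm_withDensityᵥ_le (m : Measure Ω) [IsFiniteMeasure m] {ρ : Ω → ℝ}
    (hρ : Integrable ρ m) :
    tvNorm (m.withDensityᵥ ρ) ≤ ∫ x, |ρ x| ∂m := by
  obtain ⟨i, hi, he⟩ := tvNorm_eq (m.withDensityᵥ ρ)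
  rw [he, withDensityᵥ_apply hρ hi, withDensityᵥ_apply hρ hi.compl]
  have h1 : ∫ x in i, ρ x ∂m ≤ ∫ x in i, |ρ x| ∂m :=
    integral_mono hρ.integrableOn hρ.abs.integrableOn fun x => le_abs_self _
  have h2 : -∫ x in iᶜ, ρ x ∂m ≤ ∫ x in iᶜ, |ρ x| ∂m := by
    rw [← integral_neg]
    exact integral_mono hρ.neg.integrableOn hρ.abs.integrableOn fun x => neg_le_abs _
  have h3 : ∫ x in i, |ρ x| ∂m + ∫ x in iᶜ, |ρ x| ∂m = ∫ x, |ρ x| ∂m :=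
    integral_add_compl hi hρ.abs
  linarith

/-- Master approximation lemma: to prove a property of all bounded measurable functions, it
suffices to prove it for indicators, sums, and uniformly bounded pointwise limits. -/
lemma bdd_induction (Q : (Ω → ℝ) → Prop)
    (hind : ∀ (c : ℝ) (A : Set Ω), MeasurableSet A → Q (A.indicator fun _ => c))
    (hadd : ∀ f g : Ω → ℝ, Measurable f → Measurable g → (∃ C, ∀ x, |f x| ≤ C) →
      (∃ C, ∀ x, |g x| ≤ C) → Q f → Q g → Q (fun x => f x + g x))
    (hlim : ∀ (F : ℕ → Ω → ℝ) (f : Ω → ℝ) (C : ℝ), (∀ n, Measurable (F n)) → Measurable f →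
      (∀ n x, |F n x| ≤ C) → (∀ x, Tendsto (fun n => F n x) atTop (𝓝 (f x))) →
      (∀ n, Q (F n)) → Q f)
    {f : Ω → ℝ} (hf : Measurable f) (hbdd : ∃ C, ∀ x, |f x| ≤ C) : Q f := by
  have hsimple : ∀ g : SimpleFunc Ω ℝ, Q ⇑g := by
    intro g
    refine SimpleFunc.induction (motive := fun g : SimpleFunc Ω ℝ => Q ⇑g)
      (fun c {s} hs => ?_) (fun f' g' hdisj hq1 hq2 => ?_) g
    · have hcoe : ⇑(SimpleFunc.piecewise s hs (SimpleFunc.const Ω c) (SimpleFunc.const Ω 0))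
          = s.indicator fun _ => c := by
        ext x
        by_cases h : x ∈ s <;> simp [SimpleFunc.piecewise_apply, h]
      rw [hcoe]
      exact hind c s hs
    · have hb1 : ∃ C, ∀ x, |f' x| ≤ C := by
        obtain ⟨C, hC⟩ := (f'.map (|·|)).exists_forall_le
        exact ⟨C, fun x => by simpa using hC x⟩
      have hb2 : ∃ C, ∀ x, |g' x| ≤ C := by
        obtain ⟨C, hC⟩ := (g'.map (|·|)).exists_forall_le
        exact ⟨C, fun x => by simpa using hC x⟩
      have := hadd f' g' f'.measurable g'.measurable hb1 hb2 hq1 hq2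
      have hcoe : ⇑(f' + g') = fun x => f' x + g' x := by ext x; simp
      rw [hcoe]
      exact this
  obtain ⟨C, hC⟩ := hbdd
  set F : ℕ → SimpleFunc Ω ℝ :=
    fun n => SimpleFunc.approxOn f hf Set.univ 0 (Set.mem_univ 0) n with hFdef
  have hdist : ∀ n x, dist (F n x) (f x) ≤ |f x| := by
    intro n x
    have := SimpleFunc.edist_approxOn_le hf (Set.mem_univ 0) x n
    rw [edist_dist, edist_dist] at this
    have h := (ENNReal.ofReal_le_ofReal_iff dist_nonneg).1 this
    simpa [Real.dist_eq, abs_sub_comm] using h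
  refine hlim (fun n => ⇑(F n)) f (C + C) (fun n => (F n).measurable) hf ?_ ?_
    (fun n => hsimple (F n))
  · intro n x
    calc |F n x| = |(F n x - f x) + f x| := by ring_nf
      _ ≤ |F n x - f x| + |f x| := abs_add_le _ _
      _ ≤ |f x| + |f x| := by
          have := hdist n x
          rw [Real.dist_eq] at this
          linarith
      _ ≤ C + C := by have := hC x; linarith
  · intro x
    exact SimpleFunc.tendsto_approxOn hf (Set.mem_univ 0) (by simp)


lemma toSignedMeasure_eq_add {m1 m2 m3 : Measure Ω} [IsFiniteMeasure m1] [IsFiniteMeasure m2]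
    [IsFiniteMeasure m3] (h : m3 = m1 + m2) :
    m3.toSignedMeasure = m1.toSignedMeasure + m2.toSignedMeasure := by
  ext B hB
  rw [Measure.toSignedMeasure_apply_measurable hB, h, Measure.real, Measure.add_apply,
    ENNReal.toReal_add (measure_ne_top _ _) (measure_ne_top _ _), VectorMeasure.add_apply,
    Measure.toSignedMeasure_apply_measurable hB, Measure.toSignedMeasure_apply_measurable hB]
  rfl

lemma toSignedMeasure_eq_zero {m1 : Measure Ω} [IsFiniteMeasure m1] (h : m1 = 0) :
    m1.toSignedMeasure = 0 := by
  ext B hB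
  rw [Measure.toSignedMeasure_apply_measurable hB, h]
  simp

lemma sInt_withDensityᵥ (m : Measure Ω) [IsFiniteMeasure m] {ρ : Ω → ℝ} (hρ : Integrable ρ m)
    {f : Ω → ℝ} (hf : Measurable f) (hb : ∃ C, ∀ x, |f x| ≤ C) :
    sInt (m.withDensityᵥ ρ) f = ∫ x, f x * ρ x ∂m := by
  refine bdd_induction (fun f => sInt (m.withDensityᵥ ρ) f = ∫ x, f x * ρ x ∂m)
    ?_ ?_ ?_ hf hb
  · intro c A hA
    rw [sInt_indicator _ hA c, withDensityᵥ_apply hρ hA]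
    have h1 : (fun x => (A.indicator (fun _ => c) x) * ρ x) = A.indicator fun x => c * ρ x :=
      funext fun x => by by_cases h : x ∈ A <;> simp [h]
    rw [h1, integral_indicator hA, integral_const_mul]
  · intro f1 f2 h1m h2m hb1 hb2 hp1 hp2
    obtain ⟨C1, hC1⟩ := hb1
    obtain ⟨C2, hC2⟩ := hb2
    have int1 : Integrable (fun x => f1 x * ρ x) m :=
      hρ.bdd_mul h1m.aestronglyMeasurable
        (ae_of_all _ fun x => by simpa [Real.norm_eq_abs] using hC1 x)
    have int2 : Integrable (fun x => f2 x * ρ x) m :=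
      hρ.bdd_mul h2m.aestronglyMeasurable
        (ae_of_all _ fun x => by simpa [Real.norm_eq_abs] using hC2 x)
    rw [sInt_add _ h1m h2m ⟨C1, hC1⟩ ⟨C2, hC2⟩, hp1, hp2]
    have h2 : (fun x => (f1 x + f2 x) * ρ x) = fun x => f1 x * ρ x + f2 x * ρ x :=
      funext fun x => by ring
    rw [h2, integral_add int1 int2]
  · intro F f C hFm hfm hFb hFt hQ
    have hL : Tendsto (fun n => sInt (m.withDensityᵥ ρ) (F n)) atTop
        (𝓝 (sInt (m.withDensityᵥ ρ) f)) := sInt_tendsto _ hFm hFb hFt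
    have hR : Tendsto (fun n => ∫ x, F n x * ρ x ∂m) atTop (𝓝 (∫ x, f x * ρ x ∂m)) := by
      refine tendsto_integral_of_dominated_convergence (fun x => C * |ρ x|)
        (fun n => (hFm n).aestronglyMeasurable.mul hρ.1)
        (hρ.abs.const_mul C) (fun n => ae_of_all _ fun x => ?_) (ae_of_all _ fun x => ?_)
      · rw [Real.norm_eq_abs, abs_mul]
        exact mul_le_mul_of_nonneg_right (hFb n x) (abs_nonneg _)
      · exact (hFt x).mul_const (ρ x)
    have he : (fun n => sInt (m.withDensityᵥ ρ) (F n)) = fun n => ∫ x, F n x * ρ x ∂m :=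
      funext hQ
    rw [he] at hL
    exact tendsto_nhds_unique hL hR

/-- Riesz-type representation of a bounded functional on the band of measures absolutely
continuous with respect to a finite measure `m`. -/
lemma exists_repr (m : Measure Ω) [IsFiniteMeasure m] (φ : SignedMeasure Ω →ₗ[ℝ] ℝ)
    (C0 : ℝ) (hC0nonneg : 0 ≤ C0) (hC0 : ∀ ν, |φ ν| ≤ C0 * tvNorm ν) :
    ∃ g' : Ω → ℝ, Measurable g' ∧ (∀ x, |g' x| ≤ C0) ∧
      ∀ ρ : Ω → ℝ, Integrable ρ m → φ (m.withDensityᵥ ρ) = ∫ x, g' x * ρ x ∂m := by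
  classical
  set τ : Set Ω → SignedMeasure Ω := fun A => (m.restrict A).toSignedMeasure with hτdef
  have hτ_tv : ∀ A : Set Ω, tvNorm (τ A) ≤ (m A).toReal := by
    intro A
    have := tvNorm_toSignedMeasure_le (m.restrict A)
    rwa [Measure.restrict_apply_univ] at this
  have hτ_union : ∀ A B : Set Ω, MeasurableSet B → Disjoint A B → τ (A ∪ B) = τ A + τ B := by
    intro A B hB hd
    exact toSignedMeasure_eq_add (Measure.restrict_union hd hB)
  have hτ_empty : τ ∅ = 0 := toSignedMeasure_eq_zero Measure.restrict_empty
  have hτ_finset : ∀ (g : ℕ → Set Ω), (∀ i, MeasurableSet (g i)) → Pairwise (Function.onFun Disjoint g) →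
      ∀ s : Finset ℕ, τ (⋃ i ∈ s, g i) = ∑ i ∈ s, τ (g i) := by
    intro g hgm hgd s
    induction s using Finset.induction with
    | empty => simpa using hτ_empty
    | @insert a s' hns ih =>
      have hmB : MeasurableSet (⋃ i ∈ s', g i) :=
        MeasurableSet.biUnion (Finset.countable_toSet _) fun i _ => hgm i
      have hdisj : Disjoint (g a) (⋃ i ∈ s', g i) := by
        rw [Set.disjoint_iUnion₂_right]
        intro i hi
        exact hgd fun h => hns (h ▸ hi)
      rw [Finset.set_biUnion_insert, hτ_union _ _ hmB hdisj, ih, Finset.sum_insert hns]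
  have hm_iUnion : ∀ ⦃g : ℕ → Set Ω⦄, (∀ i, MeasurableSet (g i)) → Pairwise (Function.onFun Disjoint g) →
      HasSum (fun i => if MeasurableSet (g i) then φ (τ (g i)) else 0)
        (if MeasurableSet (⋃ i, g i) then φ (τ (⋃ i, g i)) else 0) := by
    intro g hgm hgd
    have hT : MeasurableSet (⋃ i, g i) := MeasurableSet.iUnion hgm
    rw [if_pos hT]
    have hfe : (fun i => if MeasurableSet (g i) then φ (τ (g i)) else 0)
        = fun i => φ (τ (g i)) := funext fun i => if_pos (hgm i)
    rw [hfe]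
    set T := ⋃ i, g i with hTdef
    set a : ℕ → ℝ := fun n => (m (g n)).toReal with hadef
    have hsum_ne : ∑' n, m (g n) ≠ ⊤ := by
      rw [← measure_iUnion hgd hgm]; exact measure_ne_top _ _
    have hsa : Summable a := ENNReal.summable_toReal hsum_ne
    have htsum : ∑' n, a n = (m T).toReal := by
      rw [hadef, ← ENNReal.tsum_toReal_eq fun n => measure_ne_top _ _,
        measure_iUnion hgd hgm]
    have hha : HasSum a (m T).toReal := htsum ▸ hsa.hasSum
    have hest : ∀ s : Finset ℕ, |∑ i ∈ s, φ (τ (g i)) - φ (τ T)|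
        ≤ C0 * ((m T).toReal - ∑ i ∈ s, a i) := by
      intro s
      set B := ⋃ i ∈ s, g i with hBdef
      have hBm : MeasurableSet B :=
        MeasurableSet.biUnion (Finset.countable_toSet _) fun i _ => hgm i
      have hBsub : B ⊆ T := Set.iUnion₂_subset fun i _ => Set.subset_iUnion g i
      have hsplit : τ T = τ B + τ (T \ B) := by
        rw [← hτ_union B (T \ B) (hT.diff hBm) disjoint_sdiff_self_right,
          Set.union_diff_cancel hBsub]
      have h1 : ∑ i ∈ s, φ (τ (g i)) = φ (τ B) := by
        rw [hBdef, hτ_finset g hgm hgd s, map_sum]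
      have h2 : φ (τ B) - φ (τ T) = -φ (τ (T \ B)) := by
        rw [hsplit, map_add]; ring
      rw [h1, h2, abs_neg]
      have hd1 : (m (T \ B)).toReal = (m T).toReal - ∑ i ∈ s, a i := by
        rw [measure_diff hBsub hBm.nullMeasurableSet (measure_ne_top _ _),
          ENNReal.toReal_sub_of_le (measure_mono hBsub) (measure_ne_top _ _)]
        congr 1
        rw [hBdef, measure_biUnion_finset (fun i _ j _ hij => hgd hij) fun i _ => hgm i,
          ENNReal.toReal_sum fun i _ => measure_ne_top _ _]
      calc |φ (τ (T \ B))| ≤ C0 * tvNorm (τ (T \ B)) := hC0 _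
        _ ≤ C0 * (m (T \ B)).toReal :=
            mul_le_mul_of_nonneg_left (hτ_tv _) hC0nonneg
        _ = C0 * ((m T).toReal - ∑ i ∈ s, a i) := by rw [hd1]
    show Tendsto (fun s : Finset ℕ => ∑ i ∈ s, φ (τ (g i))) atTop (𝓝 (φ (τ T)))
    rw [tendsto_iff_dist_tendsto_zero]
    have hten : Tendsto (fun s : Finset ℕ => C0 * ((m T).toReal - ∑ i ∈ s, a i)) atTop
        (𝓝 (C0 * ((m T).toReal - (m T).toReal))) :=
      (tendsto_const_nhds.sub hha).const_mul C0
    rw [sub_self, mul_zero] at hten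
    refine squeeze_zero (fun s => dist_nonneg) (fun s => ?_) hten
    rw [Real.dist_eq]
    exact hest s
  set lam : SignedMeasure Ω :=
    ⟨fun A => if MeasurableSet A then φ (τ A) else 0,
      by
        show (if MeasurableSet (∅ : Set Ω) then φ (τ ∅) else 0) = 0
        rw [if_pos MeasurableSet.empty, hτ_empty, map_zero],
      fun _A h => if_neg h, hm_iUnion⟩ with hlamdef
  have hlam_apply : ∀ {A : Set Ω}, MeasurableSet A → lam A = φ (τ A) := by
    intro A hA
    show (if MeasurableSet A then φ (τ A) else 0) = φ (τ A)
    exact if_pos hA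
  have hlam_ac : lam ≪ᵥ m.toENNRealVectorMeasure := by
    refine VectorMeasure.AbsolutelyContinuous.mk fun A hA h0 => ?_
    rw [Measure.toENNRealVectorMeasure_apply_measurable hA] at h0
    rw [hlam_apply hA]
    have hr : m.restrict A = 0 := Measure.restrict_eq_zero.mpr h0
    have hτ0 : τ A = 0 := toSignedMeasure_eq_zero hr
    rw [hτ0, map_zero]
  set g0 : Ω → ℝ := lam.rnDeriv m with hg0def
  have hg0int : Integrable g0 m := SignedMeasure.integrable_rnDeriv _ _
  have hwd0 : m.withDensityᵥ g0 = lam := SignedMeasure.withDensityᵥ_rnDeriv_eq lam m hlam_ac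
  have hlam_int : ∀ {A : Set Ω}, MeasurableSet A → lam A = ∫ x in A, g0 x ∂m := by
    intro A hA
    rw [← hwd0, withDensityᵥ_apply hg0int hA]
  have hlam_bdd : ∀ {A : Set Ω}, MeasurableSet A → |lam A| ≤ C0 * (m A).toReal := by
    intro A hA
    rw [hlam_apply hA]
    exact le_trans (hC0 _) (mul_le_mul_of_nonneg_left (hτ_tv A) hC0nonneg)
  have hg0_ae : ∀ᵐ x ∂m, |g0 x| ≤ C0 := by
    have h1 : 0 ≤ᵐ[m] fun x => C0 - g0 x := by
      refine ae_nonneg_of_forall_setIntegral_nonneg ((integrable_const C0).sub hg0int) ?_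
      intro A hA _
      rw [integral_sub ((integrableOn_const_iff (C := C0)).mpr (Or.inr (measure_lt_top _ _)))
        hg0int.integrableOn, setIntegral_const]
      have hb := hlam_bdd hA
      have hi := hlam_int hA
      have h3 : ∫ x in A, g0 x ∂m ≤ C0 * (m A).toReal := by
        rw [← hi]; exact le_trans (le_abs_self _) hb
      simp only [smul_eq_mul, Measure.real]
      linarith
    have h2 : 0 ≤ᵐ[m] fun x => g0 x + C0 := by
      refine ae_nonneg_of_forall_setIntegral_nonneg
        (hg0int.add (integrable_const C0)) ?_
      intro A hA _
      rw [integral_add hg0int.integrableOn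
        ((integrableOn_const_iff (C := C0)).mpr (Or.inr (measure_lt_top _ _))), setIntegral_const]
      have hb := hlam_bdd hA
      have hi := hlam_int hA
      have h3 : -(C0 * (m A).toReal) ≤ ∫ x in A, g0 x ∂m := by
        rw [← hi]
        have := neg_abs_le (lam A)
        linarith
      simp only [smul_eq_mul, Measure.real]
      linarith
    filter_upwards [h1, h2] with x hx1 hx2
    simp only [Pi.zero_apply] at hx1 hx2
    rw [abs_le]
    constructor <;> linarith
  refine ⟨fun x => max (-C0) (min C0 (g0 x)),
    measurable_const.max (measurable_const.min (SignedMeasure.measurable_rnDeriv _ _)),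
    fun x => ?_, ?_⟩
  · rw [abs_le]
    refine ⟨le_max_left _ _, max_le (by linarith) (min_le_left _ _)⟩
  set g' : Ω → ℝ := fun x => max (-C0) (min C0 (g0 x)) with hg'def
  have hg'meas : Measurable g' :=
    measurable_const.max (measurable_const.min (SignedMeasure.measurable_rnDeriv _ _))
  have hg'bdd : ∀ x, |g' x| ≤ C0 := by
    intro x
    rw [abs_le]
    exact ⟨le_max_left _ _, max_le (by linarith) (min_le_left _ _)⟩
  have hg'ae : g' =ᵐ[m] g0 := by
    filter_upwards [hg0_ae] with x hx
    rw [abs_le] at hx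
    simp only [hg'def]
    rw [min_eq_right hx.2, max_eq_right hx.1]
  have hg'int : Integrable g' m := integrable_of_bdd hg'meas hg'bdd
  have hwd' : m.withDensityᵥ g' = lam := by
    rw [← hwd0]
    exact WithDensityᵥEq.congr_ae hg'ae
  have hlam_int' : ∀ {A : Set Ω}, MeasurableSet A → lam A = ∫ x in A, g' x ∂m := by
    intro A hA
    rw [← hwd', withDensityᵥ_apply hg'int hA]
  -- the representation, by `Integrable.induction`
  intro ρ hρ
  refine Integrable.induction (μ := m)
    (P := fun ρ => φ (m.withDensityᵥ ρ) = ∫ x, g' x * ρ x ∂m) ?_ ?_ ?_ ?_ hρ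
  · intro c A hA _hAfin
    have hwdind : m.withDensityᵥ (A.indicator fun _ => c) = c • τ A := by
      ext B hB
      rw [withDensityᵥ_apply ((integrable_const c).indicator hA) hB,
        setIntegral_indicator hA, setIntegral_const, VectorMeasure.smul_apply]
      simp only [hτdef]
      rw [Measure.toSignedMeasure_apply_measurable hB, measureReal_restrict_apply hB]
      simp [smul_eq_mul, mul_comm]
    rw [hwdind, LinearMap.map_smul, smul_eq_mul, ← hlam_apply hA, hlam_int' hA]
    have h4 : (fun x => g' x * (A.indicator (fun _ => c) x))
        = A.indicator fun x => g' x * c := by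
      funext x
      by_cases h : x ∈ A <;> simp [h]
    rw [h4, integral_indicator hA, integral_mul_const]
    ring
  · intro f1 f2 _hdisj hi1 hi2 hp1 hp2
    have int1 : Integrable (fun x => g' x * f1 x) m :=
      hi1.bdd_mul hg'meas.aestronglyMeasurable
        (ae_of_all _ fun x => by simpa [Real.norm_eq_abs] using hg'bdd x)
    have int2 : Integrable (fun x => g' x * f2 x) m :=
      hi2.bdd_mul hg'meas.aestronglyMeasurable
        (ae_of_all _ fun x => by simpa [Real.norm_eq_abs] using hg'bdd x)
    rw [withDensityᵥ_add hi1 hi2, map_add, hp1, hp2]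
    have h5 : (fun x => g' x * (f1 + f2) x) = fun x => g' x * f1 x + g' x * f2 x := by
      funext x; simp [mul_add]
    rw [h5, integral_add int1 int2]
  · -- closedness
    have hc1 : Continuous fun h : (Ω →₁[m] ℝ) => φ (m.withDensityᵥ ⇑h) := by
      have hlip : LipschitzWith C0.toNNReal fun h : (Ω →₁[m] ℝ) => φ (m.withDensityᵥ ⇑h) := by
        refine LipschitzWith.of_dist_le_mul fun h1 h2 => ?_
        have hi1 : Integrable (⇑h1) m := L1.integrable_coeFn h1
        have hi2 : Integrable (⇑h2) m := L1.integrable_coeFn h2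
        rw [Real.dist_eq, ← map_sub, ← withDensityᵥ_sub hi1 hi2,
          Real.coe_toNNReal C0 hC0nonneg]
        calc |φ (m.withDensityᵥ (⇑h1 - ⇑h2))| ≤ C0 * tvNorm (m.withDensityᵥ (⇑h1 - ⇑h2)) :=
              hC0 _
          _ ≤ C0 * ∫ x, |(⇑h1 - ⇑h2) x| ∂m :=
              mul_le_mul_of_nonneg_left (tvNorm_withDensityᵥ_le m (hi1.sub hi2)) hC0nonneg
          _ = C0 * dist h1 h2 := by
              rw [L1.dist_eq_integral_dist]
              have he : (fun a => dist (h1 a) (h2 a)) = fun x => |(⇑h1 - ⇑h2) x| := by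
                funext a; simp [Real.dist_eq]
              rw [he]
      exact hlip.continuous
    have hc2 : Continuous fun h : (Ω →₁[m] ℝ) => ∫ x, g' x * h x ∂m := by
      have hlip : LipschitzWith C0.toNNReal fun h : (Ω →₁[m] ℝ) => ∫ x, g' x * h x ∂m := by
        refine LipschitzWith.of_dist_le_mul fun h1 h2 => ?_
        have hi1 : Integrable (⇑h1) m := L1.integrable_coeFn h1
        have hi2 : Integrable (⇑h2) m := L1.integrable_coeFn h2
        have int1 : Integrable (fun x => g' x * h1 x) m :=
          hi1.bdd_mul hg'meas.aestronglyMeasurable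
            (ae_of_all _ fun x => by simpa [Real.norm_eq_abs] using hg'bdd x)
        have int2 : Integrable (fun x => g' x * h2 x) m :=
          hi2.bdd_mul hg'meas.aestronglyMeasurable
            (ae_of_all _ fun x => by simpa [Real.norm_eq_abs] using hg'bdd x)
        rw [Real.dist_eq, Real.coe_toNNReal C0 hC0nonneg, ← integral_sub int1 int2]
        have hptw : (fun x => g' x * h1 x - g' x * h2 x) = fun x => g' x * (h1 x - h2 x) := by
          funext x; ring
        rw [hptw]
        have hid : Integrable (fun x => h1 x - h2 x) m := hi1.sub hi2
        calc |∫ x, g' x * (h1 x - h2 x) ∂m| ≤ ∫ x, |g' x| * |h1 x - h2 x| ∂m := by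
              simpa [Real.norm_eq_abs] using
                norm_integral_le_integral_norm (μ := m) fun x => g' x * (h1 x - h2 x)
          _ ≤ ∫ x, C0 * |h1 x - h2 x| ∂m := by
              refine integral_mono ?_ (hid.abs.const_mul C0)
                fun x => mul_le_mul_of_nonneg_right (hg'bdd x) (abs_nonneg _)
              have habs : (fun x => |g' x| * |h1 x - h2 x|)
                  = fun x => |g' x * (h1 x - h2 x)| := by funext x; rw [abs_mul]
              rw [habs]
              exact (hid.bdd_mul hg'meas.aestronglyMeasurable
                (ae_of_all _ fun x => by simpa [Real.norm_eq_abs] using hg'bdd x)).abs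
          _ = C0 * ∫ x, |h1 x - h2 x| ∂m := integral_const_mul _ _
          _ = C0 * dist h1 h2 := by
              rw [L1.dist_eq_integral_dist]
              have he : (fun a => dist (h1 a) (h2 a)) = fun x => |h1 x - h2 x| := by
                funext a; simp [Real.dist_eq]
              rw [he]
      exact hlip.continuous
    exact isClosed_eq hc1 hc2
  · intro f1 f2 hfe hi1 hp1
    rw [← WithDensityᵥEq.congr_ae hfe, hp1]
    refine integral_congr_ae ?_
    filter_upwards [hfe] with x hx
    rw [hx]

end Aux

/-- Let `S` be a positive kernel operator on `M(Ω)` with kernel `k`, and assume there is a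
finite positive measure `μ` such that `k (x, ·) ≪ μ` for every `x`. Then (a) the range of
`S` is contained in the band generated by `μ`, i.e. `S ν ≪ μ` for all `ν`; and (b) the norm
adjoint `S*` maps the norm dual `M(Ω)*` into `B_b(Ω)`. -/
theorem kernel_operator_range_in_band_and_adjoint_into_Bb
    {Ω : Type*} [MeasurableSpace Ω]
    (k : Ω → SignedMeasure Ω)
    (hk : IsBoundedKernel k)
    (hkpos : ∀ (x : Ω) (A : Set Ω), MeasurableSet A → 0 ≤ k x A)
    (S : SignedMeasure Ω → SignedMeasure Ω)
    (hS : ∀ (ν : SignedMeasure Ω) (A : Set Ω), MeasurableSet A →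
      S ν A = sInt ν (fun x => k x A))
    (μ : SignedMeasure Ω) (hμpos : 0 ≤ μ)
    (hac : ∀ (x : Ω) (A : Set Ω), MeasurableSet A → μ A = 0 → k x A = 0) :
    -- (a) `S ν` is absolutely continuous with respect to `μ` for every `ν`:
    (∀ (ν : SignedMeasure Ω) (A : Set Ω), MeasurableSet A → μ A = 0 → S ν A = 0) ∧
    -- (b) every bounded linear functional on `M(Ω)`, composed with `S`, is represented by
    -- integration against a bounded measurable function:
    (∀ φ : SignedMeasure Ω →ₗ[ℝ] ℝ, (∃ C : ℝ, ∀ ν : SignedMeasure Ω, |φ ν| ≤ C * tvNorm ν) →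
      ∃ f : Ω → ℝ, IsBddMeas f ∧ ∀ ν : SignedMeasure Ω, φ (S ν) = sInt ν f) := by
  -- part (a)
  have parta : ∀ (ν : SignedMeasure Ω) (A : Set Ω), MeasurableSet A → μ A = 0 → S ν A = 0 := by
    intro ν A hA hμA
    rw [hS ν A hA]
    have h0 : (fun x => k x A) = fun _ => (0 : ℝ) := funext fun x => hac x A hA hμA
    rw [h0]
    simp [sInt]
  refine ⟨parta, ?_⟩
  intro φ hφ
  obtain ⟨C, hCb⟩ := hφ
  set C0 : ℝ := max C 0 with hC0def
  have hC0nonneg : 0 ≤ C0 := le_max_right _ _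
  have hC0 : ∀ ν, |φ ν| ≤ C0 * tvNorm ν := fun ν =>
    le_trans (hCb ν) (mul_le_mul_of_nonneg_right (le_max_left _ _) (tvNorm_nonneg ν))
  obtain ⟨Ck, hCk⟩ := hk.2
  set μm : Measure Ω := μ.totalVariation with hμmdef
  haveI : IsFiniteMeasure μm := inferInstanceAs
    (IsFiniteMeasure (μ.toJordanDecomposition.posPart + μ.toJordanDecomposition.negPart))
  -- measurability of `x ↦ sInt (k x) f` for bounded measurable `f`
  have hQ1 : ∀ f : Ω → ℝ, Measurable f → (∃ C, ∀ x, |f x| ≤ C) →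
      Measurable fun x => sInt (k x) f := by
    intro f hf hb
    refine bdd_induction (fun f => Measurable fun x => sInt (k x) f) ?_ ?_ ?_ hf hb
    · intro c A hA
      have h1 : (fun x => sInt (k x) (A.indicator fun _ => c)) = fun x => c * k x A :=
        funext fun x => sInt_indicator (k x) hA c
      rw [h1]
      exact (hk.1 A hA).const_mul c
    · intro f1 f2 h1 h2 hb1 hb2 hp1 hp2
      have h3 : (fun x => sInt (k x) fun y => f1 y + f2 y)
          = fun x => sInt (k x) f1 + sInt (k x) f2 :=
        funext fun x => sInt_add (k x) h1 h2 hb1 hb2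
      rw [h3]
      exact hp1.add hp2
    · intro F f C' hFm hfm hFb hFt hQ
      refine measurable_of_tendsto_metrizable hQ ?_
      rw [tendsto_pi_nhds]
      intro x
      exact sInt_tendsto (k x) hFm hFb hFt
  -- uniform bound for `x ↦ sInt (k x) f`
  have hkb : ∀ (f : Ω → ℝ) (Cf : ℝ), (∀ x, |f x| ≤ Cf) →
      ∀ x, |sInt (k x) f| ≤ max Cf 0 * max Ck 0 := by
    intro f Cf hbf x
    calc |sInt (k x) f| ≤ Cf * tvNorm (k x) := sInt_abs_le (k x) hbf
      _ ≤ max Cf 0 * tvNorm (k x) :=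
          mul_le_mul_of_nonneg_right (le_max_left _ _) (tvNorm_nonneg _)
      _ ≤ max Cf 0 * max Ck 0 :=
          mul_le_mul_of_nonneg_left (le_trans (hCk x) (le_max_left _ _)) (le_max_right _ _)
  -- the Fubini-type identity
  have hQ2 : ∀ (ν : SignedMeasure Ω) (f : Ω → ℝ), Measurable f → (∃ C, ∀ x, |f x| ≤ C) →
      sInt (S ν) f = sInt ν fun x => sInt (k x) f := by
    intro ν f hf hb
    refine bdd_induction (fun f => sInt (S ν) f = sInt ν fun x => sInt (k x) f) ?_ ?_ ?_ hf hb
    · intro c A hA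
      rw [sInt_indicator _ hA c, hS ν A hA]
      have h1 : (fun x => sInt (k x) (A.indicator fun _ => c)) = fun x => c * k x A :=
        funext fun x => sInt_indicator (k x) hA c
      rw [h1, sInt_smul]
    · intro f1 f2 h1 h2 hb1 hb2 hp1 hp2
      obtain ⟨C1, hC1⟩ := hb1
      obtain ⟨C2, hC2⟩ := hb2
      rw [sInt_add _ h1 h2 ⟨C1, hC1⟩ ⟨C2, hC2⟩, hp1, hp2]
      have h3 : (fun x => sInt (k x) fun y => f1 y + f2 y)
          = fun x => sInt (k x) f1 + sInt (k x) f2 :=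
        funext fun x => sInt_add (k x) h1 h2 ⟨C1, hC1⟩ ⟨C2, hC2⟩
      rw [h3, sInt_add ν (hQ1 f1 h1 ⟨C1, hC1⟩) (hQ1 f2 h2 ⟨C2, hC2⟩)
        ⟨max C1 0 * max Ck 0, hkb f1 C1 hC1⟩ ⟨max C2 0 * max Ck 0, hkb f2 C2 hC2⟩]
    · intro F f C' hFm hfm hFb hFt hQ
      have hL := sInt_tendsto (S ν) hFm hFb hFt
      have hR : Tendsto (fun n => sInt ν fun x => sInt (k x) (F n)) atTop
          (𝓝 (sInt ν fun x => sInt (k x) f)) := by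
        refine sInt_tendsto ν (F := fun n x => sInt (k x) (F n)) (C := max C' 0 * max Ck 0)
          (fun n => hQ1 (F n) (hFm n) ⟨C', hFb n⟩) (fun n x => hkb (F n) C' (hFb n) x)
          (fun x => sInt_tendsto (k x) hFm hFb hFt)
      have he : (fun n => sInt (S ν) (F n)) = fun n => sInt ν fun x => sInt (k x) (F n) :=
        funext hQ
      rw [he] at hL
      exact tendsto_nhds_unique hL hR
  -- representation of φ on the band of μ
  obtain ⟨g', hg'meas, hg'bdd, hrep⟩ := exists_repr μm φ C0 hC0nonneg hC0
  refine ⟨fun x => sInt (k x) g',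
    ⟨hQ1 g' hg'meas ⟨C0, hg'bdd⟩, ⟨max C0 0 * max Ck 0, fun x => hkb g' C0 hg'bdd x⟩⟩, ?_⟩
  intro ν
  have hSν_ac : S ν ≪ᵥ μm.toENNRealVectorMeasure := by
    refine VectorMeasure.AbsolutelyContinuous.mk fun A hA h0 => ?_
    rw [Measure.toENNRealVectorMeasure_apply_measurable hA] at h0
    exact parta ν A hA (μ.null_of_totalVariation_zero h0)
  have hρνint : Integrable ((S ν).rnDeriv μm) μm := SignedMeasure.integrable_rnDeriv _ _
  have hρν : μm.withDensityᵥ ((S ν).rnDeriv μm) = S ν :=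
    SignedMeasure.withDensityᵥ_rnDeriv_eq _ _ hSν_ac
  calc φ (S ν) = φ (μm.withDensityᵥ ((S ν).rnDeriv μm)) := by rw [hρν]
    _ = ∫ x, g' x * (S ν).rnDeriv μm x ∂μm := hrep _ hρνint
    _ = sInt (μm.withDensityᵥ ((S ν).rnDeriv μm)) g' :=
        (sInt_withDensityᵥ μm hρνint hg'meas ⟨C0, hg'bdd⟩).symm
    _ = sInt (S ν) g' := by rw [hρν]
    _ = sInt ν fun x => sInt (k x) g' := hQ2 ν g' hg'meas ⟨C0, hg'bdd⟩
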